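/- Let p = (p_k)_{k≥0} be a probability mass function on ℕ with p_0 ∈ (0,1) and p_0 + p_1 < 1, let f(s) = ∑_{k≥0} p_k s^k be its probability generating function and let r_f ∈ [1,∞] be the radius of convergence of f. Then: (i) if s_0 ∈ (0, r_f) satisfies s_0·f′(s_0) = f(s_0), the function s ↦ f(s)/s is strictly decreasing on (0, s_0) and strictly increasing on (s_0, r_f); (ii) if no s ∈ (0, r_f) satisfies s·f′(s) = f(s), the function s ↦ f(s)/s is strictly decreasing on (0, r_f). -/

import Mathlib

open MeasureTheory ProbabilityTheory Filter
open scoped ENNReal NNReal Topology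

noncomputable section

namespace CoevolvingNetwork

/-- The path from vertex `m` to the root `0` in the co-evolving random tree,
determined by the selection sequences: the incoming vertex `n+1` selects the
uniform vertex `V n ∈ {0,…,n}` and walks `Z (n+1)` steps from it towards the
root (stopping at the root), attaching there. -/
def pathTo (V Z : ℕ → ℕ) : ℕ → List ℕ
  | 0 => [0]
  | n + 1 =>
      let l := (pathTo V Z (min (V n) n)).drop (Z (n + 1))
      (n + 1) :: (if l = [] then [0] else l)
  termination_by m => m
  decreasing_by exact Nat.lt_succ_of_le (Nat.min_le_right _ _)

/-- The parent of vertex `v` (the root `0` is mapped to itself). -/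
def par (V Z : ℕ → ℕ) (v : ℕ) : ℕ := ((pathTo V Z v).drop 1).headD 0

/-- The degree of vertex `v` in the tree `T n` on vertices `{0,…,n}`:
the number of children of `v` among `{1,…,n}`, plus the edge to the parent
unless `v` is the root. -/
def degree (V Z : ℕ → ℕ) (n v : ℕ) : ℕ :=
  ((Finset.Icc 1 n).filter fun w => par V Z w = v).card + (if v = 0 then 0 else 1)

/-- The height of the tree `T n`: maximal distance from the root. -/
def height (V Z : ℕ → ℕ) (n : ℕ) : ℕ :=
  (Finset.range (n + 1)).sup fun v => (pathTo V Z v).length - 1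

/-- `pathCount V Z n l v` is the number of directed paths of length `l` ending at `v`
in `T n`, i.e. the number of vertices `w ≤ n` whose `l`-fold parent iterate is `v`
(with matching depths). -/
def pathCount (V Z : ℕ → ℕ) (n l v : ℕ) : ℕ :=
  ((Finset.range (n + 1)).filter fun w => (pathTo V Z w)[l]? = some v).card

/-- Graph-normalized PageRank of vertex `v` in `T n` with damping factor `c`. -/
def pageRank (V Z : ℕ → ℕ) (c : ℝ) (n v : ℕ) : ℝ :=
  (1 - c) * (1 + ∑' l : ℕ, c ^ (l + 1) * (pathCount V Z n (l + 1) v : ℝ))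

/-- The probability generating function `f(s) = ∑ p_k s^k`. -/
def pgf (p : ℕ → ℝ) (s : ℝ) : ℝ := ∑' k, p k * s ^ k

/-- The derivative `f′(s) = ∑ k p_k s^(k-1)` of the generating function. -/
def pgf' (p : ℕ → ℝ) (s : ℝ) : ℝ := ∑' k : ℕ, ((k + 1 : ℕ) : ℝ) * p (k + 1) * s ^ k

/-- `1/R = inf_{s>0} f(s)/s`, with the convention `f(s) = ∞` beyond the radius of
convergence: the infimum is over those `s > 0` where the series converges. -/
def invR (p : ℕ → ℝ) : ℝ :=
  sInf {x | ∃ s : ℝ, 0 < s ∧ Summable (fun k => p k * s ^ k) ∧ x = pgf p s / s}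

/-- The random tree model: on a probability space `(Ω, P)`, the uniform selections
`V n` (uniform on `{0,…,n}`) and the jump variables `Z n` (law `p`), all jointly
independent. -/
structure Model {Ω : Type*} [MeasurableSpace Ω] (P : Measure Ω)
    (p : ℕ → ℝ) (V Z : ℕ → Ω → ℕ) : Prop where
  prob : IsProbabilityMeasure P
  pmf_nonneg : ∀ k, 0 ≤ p k
  pmf_sum : ∑' k, p k = 1
  meas_V : ∀ n, Measurable (V n)
  meas_Z : ∀ n, Measurable (Z n)
  V_le : ∀ n ω, V n ω ≤ n
  V_unif : ∀ n k, k ≤ n → P {ω | V n ω = k} = (((n : ℝ≥0∞) + 1))⁻¹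
  Z_law : ∀ n k, P {ω | Z n ω = k} = ENNReal.ofReal (p k)
  indep : iIndepFun (Sum.elim V Z) P

/-- Assumption B of the paper: `p₀ ∈ (0,1)`, `p₀ + p₁ < 1`, and the support of `p`
has gcd one (aperiodicity). -/
def AssumptionB (p : ℕ → ℝ) : Prop :=
  0 < p 0 ∧ p 0 < 1 ∧ p 0 + p 1 < 1 ∧ ∀ d : ℕ, (∀ j, 0 < p j → d ∣ j) → d = 1


/-- `s₀`: the unique positive root of `s f′(s) = f(s)` (within the domain of
convergence) if such a root exists, and otherwise the radius of convergence of `f`. -/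
def IsS0 (p : ℕ → ℝ) (s0 : ℝ) : Prop :=
  (0 < s0 ∧ Summable (fun k => p k * s0 ^ k) ∧ s0 * pgf' p s0 = pgf p s0 ∧
    ∀ s : ℝ, 0 < s → Summable (fun k => p k * s ^ k) → s * pgf' p s = pgf p s → s = s0)
  ∨ ((∀ s : ℝ, 0 < s → Summable (fun k => p k * s ^ k) → s * pgf' p s ≠ pgf p s) ∧
      (∀ s : ℝ, 0 < s → s < s0 → Summable (fun k => p k * s ^ k)) ∧
      (∀ s : ℝ, s0 < s → ¬ Summable (fun k => p k * s ^ k)))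

namespace PgfAux

lemma summable_aux {p : ℕ → ℝ} (hp : ∀ k, 0 ≤ p k) {s t : ℝ} (hs : 0 < s) (hst : s < t)
    (ht : Summable fun k => p k * t ^ k) :
    Summable fun k : ℕ => ((k : ℝ) + 1) * p k * s ^ k := by
  have ht0 : 0 < t := hs.trans hst
  obtain ⟨M, hM⟩ : ∃ M : ℝ, ∀ k : ℕ, p k * t ^ k ≤ M := by
    obtain ⟨M, hM⟩ := ht.tendsto_atTop_zero.bddAbove_range
    exact ⟨M, fun k => hM ⟨k, rfl⟩⟩
  set r : ℝ := s / t with hr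
  have hr0 : 0 < r := div_pos hs ht0
  have hr1 : r < 1 := (div_lt_one ht0).mpr hst
  have h1 : Summable fun n : ℕ => ((n : ℝ) + 1) * r ^ n := by
    have ha : Summable fun n : ℕ => (n : ℝ) * r ^ n := by
      have := summable_pow_mul_geometric_of_norm_lt_one (R := ℝ) 1
        (r := r) (by rw [Real.norm_eq_abs, abs_of_pos hr0]; exact hr1)
      simpa using this
    have hb : Summable fun n : ℕ => r ^ n := summable_geometric_of_lt_one hr0.le hr1
    simpa [add_mul] using ha.add hb
  refine Summable.of_nonneg_of_le (fun k => by have := hp k; positivity) (fun k => ?_) (h1.mul_left M)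
  have hsk : s ^ k = t ^ k * r ^ k := by
    rw [hr, div_pow, mul_div_cancel₀]
    positivity
  calc ((k : ℝ) + 1) * p k * s ^ k = (p k * t ^ k) * (((k : ℝ) + 1) * r ^ k) := by
        rw [hsk]; ring
    _ ≤ M * (((k : ℝ) + 1) * r ^ k) := by
        apply mul_le_mul_of_nonneg_right (hM k); positivity

lemma summable_base {p : ℕ → ℝ} (hp : ∀ k, 0 ≤ p k) {s t : ℝ} (hs : 0 < s) (hst : s < t)
    (ht : Summable fun k => p k * t ^ k) :
    Summable fun k => p k * s ^ k := by
  refine Summable.of_nonneg_of_le (fun k => by have := hp k; positivity) (fun k => ?_) (summable_aux hp hs hst ht)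
  have h1 : (1 : ℝ) ≤ (k : ℝ) + 1 := by have : (0:ℝ) ≤ (k:ℝ) := Nat.cast_nonneg k; linarith
  nlinarith [hp k, pow_pos hs k, mul_nonneg (hp k) (pow_pos hs k).le]

/-- Summability of the shifted series `∑ k p_{k+1} s^{k+1}`. -/
lemma summable_shift {p : ℕ → ℝ} (hp : ∀ k, 0 ≤ p k) {s t : ℝ} (hs : 0 < s) (hst : s < t)
    (ht : Summable fun k => p k * t ^ k) :
    Summable fun k : ℕ => (k : ℝ) * p (k + 1) * s ^ (k + 1) := by
  have h1 := (summable_aux hp hs hst ht).comp_injective Nat.succ_injective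
  refine Summable.of_nonneg_of_le (fun k => by have := hp (k+1); positivity) (fun k => ?_) h1
  show (k : ℝ) * p (k + 1) * s ^ (k + 1) ≤ ((k + 1 : ℕ) + 1 : ℝ) * p (k + 1) * s ^ (k + 1)
  have : (k : ℝ) ≤ ((k + 1 : ℕ) + 1 : ℝ) := by push_cast; linarith
  nlinarith [hp (k + 1), pow_pos hs (k + 1), mul_nonneg (hp (k+1)) (pow_pos hs (k+1)).le]

lemma summable_shift' {p : ℕ → ℝ} (hp : ∀ k, 0 ≤ p k) {s t : ℝ} (hs : 0 < s) (hst : s < t)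
    (ht : Summable fun k => p k * t ^ k) :
    Summable fun k : ℕ => ((k + 1 : ℕ) : ℝ) * p (k + 1) * s ^ (k + 1) := by
  have h1 := (summable_aux hp hs hst ht).comp_injective Nat.succ_injective
  refine Summable.of_nonneg_of_le (fun k => by have := hp (k+1); positivity) (fun k => ?_) h1
  show ((k + 1 : ℕ) : ℝ) * p (k + 1) * s ^ (k + 1) ≤ ((k + 1 : ℕ) + 1 : ℝ) * p (k + 1) * s ^ (k + 1)
  have : ((k + 1 : ℕ) : ℝ) ≤ ((k + 1 : ℕ) + 1 : ℝ) := by linarith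
  nlinarith [hp (k + 1), pow_pos hs (k + 1), mul_nonneg (hp (k+1)) (pow_pos hs (k+1)).le]

lemma hasDerivAt_pgf {p : ℕ → ℝ} (hp : ∀ k, 0 ≤ p k) {s t t' : ℝ} (hs : 0 < s)
    (hst : s < t) (htt' : t < t') (ht' : Summable fun k => p k * t' ^ k) :
    HasDerivAt (pgf p) (pgf' p s) s := by
  have ht0 : 0 < t := hs.trans hst
  have hsum_t1 : Summable fun k : ℕ => ((k : ℝ) + 1) * p k * t ^ k :=
    summable_aux hp ht0 htt' ht'
  have ht : Summable fun k => p k * t ^ k := summable_base hp ht0 htt' ht'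
  have hbase : Summable fun k => p k * s ^ k := summable_base hp hs hst ht
  have key := hasDerivAt_tsum_of_isPreconnected (u := fun n : ℕ => ((n : ℝ) + 1) * p n * t ^ n / t)
    (g := fun n x => p n * x ^ n) (g' := fun n x => p n * ((n : ℝ) * x ^ (n - 1)))
    (hsum_t1.div_const t) (isOpen_Ioo (a := -t) (b := t))
    ((convex_Ioo (-t) t).isPreconnected)
    (fun n y _ => (hasDerivAt_pow n y).const_mul (p n))
    ?_ (y₀ := s) ⟨by linarith, hst⟩ hbase ⟨by linarith, hst⟩
  · have heq : (∑' n : ℕ, p n * ((n : ℝ) * s ^ (n - 1))) = pgf' p s := by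
      have hsum' : Summable fun n : ℕ => p n * ((n : ℝ) * s ^ (n - 1)) := by
        have h2 := (summable_aux hp hs hst ht).div_const s
        refine Summable.of_nonneg_of_le (fun n => by have := hp n; positivity)
          (fun n => ?_) h2
        match n with
        | 0 => simp; have := hp 0; positivity
        | Nat.succ m =>
          show p (m+1) * (((m+1 : ℕ) : ℝ) * s ^ m) ≤ ((((m+1 : ℕ)) : ℝ) + 1) * p (m+1) * s ^ (m+1) / s
          rw [le_div_iff₀ hs, pow_succ]
          have h3 : (0:ℝ) ≤ ((m+1:ℕ):ℝ) := by positivity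
          have h5 : 0 ≤ p (m+1) := hp (m+1)
          have h6 : (0:ℝ) < s ^ m := pow_pos hs m
          nlinarith [mul_nonneg h5 h6.le]
      rw [Summable.tsum_eq_zero_add hsum']
      simp only [Nat.cast_zero, zero_mul, mul_zero, zero_add]
      rw [pgf']
      refine tsum_congr fun k => ?_
      simp only [Nat.add_sub_cancel]
      push_cast
      ring
    rw [← heq]
    exact key
  · rintro n y ⟨hy1, hy2⟩
    have hyt : |y| ≤ t := abs_le.mpr ⟨hy1.le, hy2.le⟩
    match n with
    | 0 => norm_num; have := hp 0; positivity
    | Nat.succ m =>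
      have : ‖p (m+1) * (((m+1:ℕ) : ℝ) * y ^ m)‖ = p (m+1) * (((m+1:ℕ) : ℝ) * |y| ^ m) := by
        rw [norm_mul, Real.norm_eq_abs, Real.norm_eq_abs, abs_of_nonneg (hp _), abs_mul,
          abs_of_nonneg (by positivity : (0:ℝ) ≤ ((m+1:ℕ):ℝ)), abs_pow]
      show ‖p (m+1) * (((m+1:ℕ) : ℝ) * y ^ ((m+1) - 1))‖ ≤ (((m+1:ℕ) : ℝ) + 1) * p (m+1) * t ^ (m+1) / t
      simp only [Nat.add_sub_cancel]
      rw [this, le_div_iff₀ ht0, pow_succ]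
      have h1 : |y| ^ m ≤ t ^ m := pow_le_pow_left₀ (abs_nonneg y) hyt m
      have h2 : (0:ℝ) ≤ ((m+1:ℕ):ℝ) := by positivity
      have h5 := hp (m+1)
      nlinarith [mul_le_mul_of_nonneg_right (mul_le_mul_of_nonneg_left h1 (mul_nonneg h5 h2)) ht0.le,
        mul_nonneg (mul_nonneg h5 (pow_nonneg ht0.le m)) ht0.le]

lemma sub_repr {p : ℕ → ℝ} (hp : ∀ k, 0 ≤ p k) {s t : ℝ} (hs : 0 < s) (hst : s < t)
    (ht : Summable fun k => p k * t ^ k) :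
    s * pgf' p s - pgf p s = (∑' k : ℕ, (k : ℝ) * p (k + 1) * s ^ (k + 1)) - p 0 := by
  have hbase : Summable fun k => p k * s ^ k := summable_base hp hs hst ht
  have ha : Summable fun k : ℕ => ((k + 1 : ℕ) : ℝ) * p (k + 1) * s ^ (k + 1) :=
    summable_shift' hp hs hst ht
  have hb : Summable fun k : ℕ => p (k + 1) * s ^ (k + 1) :=
    hbase.comp_injective Nat.succ_injective
  have h1 : s * pgf' p s = ∑' k : ℕ, ((k + 1 : ℕ) : ℝ) * p (k + 1) * s ^ (k + 1) := by
    rw [pgf', ← tsum_mul_left]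
    exact tsum_congr fun k => by rw [pow_succ]; ring
  have h2 : pgf p s = p 0 + ∑' k : ℕ, p (k + 1) * s ^ (k + 1) := by
    rw [pgf, Summable.tsum_eq_zero_add hbase, pow_zero, mul_one]
  have h3 : (∑' k : ℕ, ((k + 1 : ℕ) : ℝ) * p (k + 1) * s ^ (k + 1))
      - (∑' k : ℕ, p (k + 1) * s ^ (k + 1)) = ∑' k : ℕ, (k : ℝ) * p (k + 1) * s ^ (k + 1) := by
    rw [← Summable.tsum_sub ha hb]
    exact tsum_congr fun k => by push_cast; ring
  rw [h1, h2]
  linarith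

end PgfAux

/-- monotonicity of `s ↦ f(s)/s` on the domain of convergence:
strictly decreasing before the root `s₀` of `s f′(s) = f(s)` and strictly
increasing after it; strictly decreasing throughout if no such root exists. -/
theorem pgf_ratio_monotonicity
    (p : ℕ → ℝ) (hp_nonneg : ∀ k, 0 ≤ p k) (hp_sum : ∑' k, p k = 1)
    (h0 : 0 < p 0) (h0' : p 0 < 1) (h01 : p 0 + p 1 < 1)
    (rf : ℝ≥0∞) (hrf1 : 1 ≤ rf)
    (hrf : ∀ s : ℝ, 0 < s →
      (ENNReal.ofReal s < rf → Summable (fun k => p k * s ^ k)) ∧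
      (rf < ENNReal.ofReal s → ¬ Summable (fun k => p k * s ^ k))) :
    (∀ s0 : ℝ, 0 < s0 → ENNReal.ofReal s0 < rf → s0 * pgf' p s0 = pgf p s0 →
      StrictAntiOn (fun s => pgf p s / s) (Set.Ioo 0 s0) ∧
      StrictMonoOn (fun s => pgf p s / s) {s : ℝ | s0 < s ∧ ENNReal.ofReal s < rf}) ∧
    ((∀ s : ℝ, 0 < s → ENNReal.ofReal s < rf → s * pgf' p s ≠ pgf p s) →
      StrictAntiOn (fun s => pgf p s / s) {s : ℝ | 0 < s ∧ ENNReal.ofReal s < rf}) := by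
  classical
  have hpsum : Summable p := by
    by_contra hc
    rw [tsum_eq_zero_of_not_summable hc] at hp_sum; norm_num at hp_sum
  obtain ⟨j, hj⟩ : ∃ j, 0 < p (j + 2) := by
    by_contra hc; push_neg at hc
    have hz : ∀ j, p (j + 2) = 0 := fun j => le_antisymm (hc j) (hp_nonneg _)
    have h2 : Summable fun k => p (k + 1) := hpsum.comp_injective Nat.succ_injective
    have he : (∑' k, p k) = p 0 + p 1 := by
      rw [Summable.tsum_eq_zero_add hpsum, Summable.tsum_eq_zero_add h2]
      simp [hz]
    rw [he] at hp_sum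
    linarith
  have hdommem : ∀ {a b : ℝ}, 0 < a → a ≤ b → ENNReal.ofReal b < rf → ENNReal.ofReal a < rf :=
    fun ha hab hb => lt_of_le_of_lt (ENNReal.ofReal_le_ofReal hab) hb
  have hbig : ∀ s : ℝ, 0 < s → ENNReal.ofReal s < rf →
      ∃ t, s < t ∧ ENNReal.ofReal t < rf := by
    intro s hs h
    obtain ⟨r, hr0, h1, h2⟩ := ENNReal.lt_iff_exists_real_btwn.mp h
    have hrpos : 0 < r := ENNReal.ofReal_pos.mp (lt_trans (ENNReal.ofReal_pos.mpr hs) h1)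
    exact ⟨r, (ENNReal.ofReal_lt_ofReal_iff hrpos).mp h1, h2⟩
  have hsummable : ∀ s : ℝ, 0 < s → ENNReal.ofReal s < rf → Summable fun k => p k * s ^ k :=
    fun s hs h => (hrf s hs).1 h
  have hmono : ∀ x y : ℝ, 0 < x → x < y → ENNReal.ofReal y < rf →
      x * pgf' p x - pgf p x < y * pgf' p y - pgf p y := by
    intro x y hx hxy hyrf
    obtain ⟨t, hyt, htrf⟩ := hbig y (hx.trans hxy) hyrf
    have ht := hsummable t (lt_trans (hx.trans hxy) hyt) htrf
    rw [PgfAux.sub_repr hp_nonneg hx (hxy.trans hyt) ht,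
        PgfAux.sub_repr hp_nonneg (hx.trans hxy) hyt ht]
    apply sub_lt_sub_right
    refine Summable.tsum_lt_tsum_of_nonneg (i := j + 1)
      (fun k => by have := hp_nonneg (k + 1); positivity) (fun k => ?_) ?_
      (PgfAux.summable_shift hp_nonneg (hx.trans hxy) hyt ht)
    · have h4 := pow_le_pow_left₀ hx.le hxy.le (k + 1)
      have h5 := hp_nonneg (k + 1)
      have h6 : (0:ℝ) ≤ (k : ℝ) := Nat.cast_nonneg k
      exact mul_le_mul_of_nonneg_left h4 (mul_nonneg h6 h5)
    · have hpow : x ^ (j + 1 + 1) < y ^ (j + 1 + 1) := pow_lt_pow_left₀ hxy hx.le (by norm_num)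
      have h6 : (0:ℝ) < ((j + 1 : ℕ) : ℝ) := by positivity
      have h5 := hj
      show ((j + 1 : ℕ) : ℝ) * p (j + 1 + 1) * x ^ (j + 1 + 1)
        < ((j + 1 : ℕ) : ℝ) * p (j + 1 + 1) * y ^ (j + 1 + 1)
      have h7 : 0 < p (j + 1 + 1) := hj
      exact mul_lt_mul_of_pos_left hpow (mul_pos h6 h7)
  have hd : ∀ x : ℝ, 0 < x → ENNReal.ofReal x < rf →
      HasDerivAt (fun s => pgf p s / s) ((pgf' p x * x - pgf p x) / x ^ 2) x := by
    intro x hx hxrf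
    obtain ⟨t, hxt, htrf⟩ := hbig x hx hxrf
    obtain ⟨t', htt', ht'rf⟩ := hbig t (hx.trans hxt) htrf
    have hf := PgfAux.hasDerivAt_pgf hp_nonneg hx hxt htt'
      (hsummable t' (lt_trans (hx.trans hxt) htt') ht'rf)
    have hdiv := hf.div (hasDerivAt_id x) (ne_of_gt hx)
    exact hdiv.congr_deriv (by simp)
  constructor
  · intro s0 hs0 hs0rf hroot
    constructor
    · apply strictAntiOn_of_deriv_neg (convex_Ioo 0 s0)
      · intro x hx
        exact (hd x hx.1 (hdommem hx.1 hx.2.le hs0rf)).continuousAt.continuousWithinAt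
      · intro x hx
        rw [interior_Ioo] at hx
        rw [(hd x hx.1 (hdommem hx.1 hx.2.le hs0rf)).deriv]
        apply div_neg_of_neg_of_pos _ (pow_pos hx.1 2)
        have h1 := hmono x s0 hx.1 hx.2 hs0rf
        rw [hroot] at h1
        nlinarith [h1]
    · have hconv : Convex ℝ {s : ℝ | s0 < s ∧ ENNReal.ofReal s < rf} :=
        Set.OrdConnected.convex ⟨fun x hx y hy z hz =>
          ⟨lt_of_lt_of_le hx.1 hz.1, lt_of_le_of_lt (ENNReal.ofReal_le_ofReal hz.2) hy.2⟩⟩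
      apply strictMonoOn_of_deriv_pos hconv
      · intro x hx
        exact (hd x (hs0.trans hx.1) hx.2).continuousAt.continuousWithinAt
      · intro x hx
        have hx' : x ∈ {s : ℝ | s0 < s ∧ ENNReal.ofReal s < rf} := interior_subset hx
        rw [(hd x (hs0.trans hx'.1) hx'.2).deriv]
        apply div_pos _ (pow_pos (hs0.trans hx'.1) 2)
        have h1 := hmono s0 x hs0 hx'.1 hx'.2
        rw [hroot] at h1
        nlinarith [h1]
  · intro hno
    have hconv : Convex ℝ {s : ℝ | 0 < s ∧ ENNReal.ofReal s < rf} :=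
      Set.OrdConnected.convex ⟨fun x hx y hy z hz =>
        ⟨lt_of_lt_of_le hx.1 hz.1, lt_of_le_of_lt (ENNReal.ofReal_le_ofReal hz.2) hy.2⟩⟩
    have hhalf : ENNReal.ofReal (1/2 : ℝ) < rf :=
      lt_of_lt_of_le (ENNReal.ofReal_lt_one.mpr (by norm_num)) hrf1
    obtain ⟨t, hht, htrf⟩ := hbig (1/2) (by norm_num) hhalf
    have ht := hsummable t (by linarith) htrf
    have hMsum : Summable (fun k : ℕ => (k : ℝ) * p (k + 1) * (1/2 : ℝ) ^ (k + 1)) :=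
      PgfAux.summable_shift hp_nonneg (by norm_num) hht ht
    set M := ∑' k : ℕ, (k : ℝ) * p (k + 1) * (1/2 : ℝ) ^ (k + 1) with hMdef
    have hM0 : 0 ≤ M := tsum_nonneg fun k => by have := hp_nonneg (k + 1); positivity
    set ε : ℝ := min (1/2) ((1/2) * p 0 / (2 * (M + 1))) with hεdef
    have hε0 : 0 < ε := lt_min (by norm_num) (by positivity)
    have hεhalf : ε ≤ 1/2 := min_le_left _ _
    have hεS : ε ∈ {s : ℝ | 0 < s ∧ ENNReal.ofReal s < rf} :=
      ⟨hε0, hdommem hε0 hεhalf hhalf⟩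
    have hεneg : ε * pgf' p ε - pgf p ε < 0 := by
      rw [PgfAux.sub_repr hp_nonneg hε0 (lt_of_le_of_lt hεhalf hht) ht]
      have hterm : ∀ k : ℕ, (k : ℝ) * p (k + 1) * ε ^ (k + 1)
          ≤ (2 * ε) * ((k : ℝ) * p (k + 1) * (1/2 : ℝ) ^ (k + 1)) := by
        intro k
        have hpow : ε ^ (k + 1) ≤ (2 * ε) * (1/2 : ℝ) ^ (k + 1) := by
          have h1 : ε ^ (k + 1) = ε * ε ^ k := by rw [pow_succ]; ring
          have h2 : ε ^ k ≤ (1/2 : ℝ) ^ k := pow_le_pow_left₀ hε0.le hεhalf k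
          have h3 : (2 * ε) * (1/2 : ℝ) ^ (k + 1) = ε * (1/2 : ℝ) ^ k := by
            rw [pow_succ]; ring
          rw [h1, h3]
          exact mul_le_mul_of_nonneg_left h2 hε0.le
        have h5 := hp_nonneg (k + 1)
        have h6 : (0:ℝ) ≤ (k : ℝ) := Nat.cast_nonneg k
        nlinarith [mul_nonneg h6 h5, pow_nonneg hε0.le (k + 1)]
      have hbound : (∑' k : ℕ, (k : ℝ) * p (k + 1) * ε ^ (k + 1)) ≤ (2 * ε) * M := by
        calc (∑' k : ℕ, (k : ℝ) * p (k + 1) * ε ^ (k + 1))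
            ≤ ∑' k : ℕ, (2 * ε) * ((k : ℝ) * p (k + 1) * (1/2 : ℝ) ^ (k + 1)) :=
              Summable.tsum_le_tsum hterm
                (PgfAux.summable_shift hp_nonneg hε0 (lt_of_le_of_lt hεhalf hht) ht)
                (hMsum.mul_left _)
          _ = (2 * ε) * M := tsum_mul_left
      have h2 : (0:ℝ) < 2 * (M + 1) := by linarith
      have h1' : ε * (2 * (M + 1)) ≤ (1/2) * p 0 :=
        (le_div_iff₀ h2).mp (min_le_right _ _)
      nlinarith [hbound, hε0, h0, hM0]
    have hne : ∀ x ∈ {s : ℝ | 0 < s ∧ ENNReal.ofReal s < rf},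
        (fun x : ℝ => (pgf' p x * x - pgf p x) / x ^ 2) x ≠ 0 := by
      intro x hx
      have hx2 : (x : ℝ) ^ 2 ≠ 0 := pow_ne_zero 2 (ne_of_gt hx.1)
      refine div_ne_zero (fun hc => hno x hx.1 hx.2 ?_) hx2
      linear_combination hc
    have hdarboux := hasDerivWithinAt_forall_lt_or_forall_gt_of_forall_ne hconv
      (f := fun s => pgf p s / s) (f' := fun x : ℝ => (pgf' p x * x - pgf p x) / x ^ 2)
      (fun x hx => (hd x hx.1 hx.2).hasDerivWithinAt) (m := 0) hne
    have hneg : ∀ x ∈ {s : ℝ | 0 < s ∧ ENNReal.ofReal s < rf},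
        (pgf' p x * x - pgf p x) / x ^ 2 < 0 := by
      rcases hdarboux with h | h
      · exact h
      · exfalso
        have h1 := h ε hεS
        have hc : (pgf' p ε * ε - pgf p ε) / ε ^ 2 < 0 :=
          div_neg_of_neg_of_pos (by nlinarith [hεneg]) (by positivity)
        linarith
    apply strictAntiOn_of_deriv_neg hconv
    · intro x hx
      exact (hd x hx.1 hx.2).continuousAt.continuousWithinAt
    · intro x hx
      have hx' : x ∈ {s : ℝ | 0 < s ∧ ENNReal.ofReal s < rf} := interior_subset hx
      rw [(hd x hx'.1 hx'.2).deriv]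
      exact hneg x hx'


end CoevolvingNetwork
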